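/- Let N ≥ 2, h > 0, and X ∈ R^N strictly increasing with sum X_i = 0, satisfying |X|^2 ≥ (2/N) * sum_{1 ≤ i ≤ j ≤ N-1} (X_{i+1} - X_i)(X_{j+1} - X_j). Then the discrete entropy U[X] = -h * sum_{i=1}^{N-1} log((X_{i+1} - X_i)/h) satisfies U[X] ≥ h(N-1) log h - (h(N-1)/2) log(|X|^2) + (h(N-1)/2) log(N-1). -/

import Mathlib

open Finset Real

theorem stmt_3 (N : ℕ) (hN : 2 ≤ N) (h : ℝ) (hh : 0 < h) (X : ℕ → ℝ)
    (hX : ∀ i, 1 ≤ i → i < N → X i < X (i + 1))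
    (hsum : ∑ i ∈ Finset.Icc 1 N, X i = 0)
    (hineq : ∑ i ∈ Finset.Icc 1 N, (X i) ^ 2 ≥
      (2 / (N : ℝ)) * ∑ i ∈ Finset.Icc 1 (N - 1), ∑ j ∈ Finset.Icc i (N - 1),
        (X (i + 1) - X i) * (X (j + 1) - X j)) :
    -h * ∑ i ∈ Finset.Icc 1 (N - 1), Real.log ((X (i + 1) - X i) / h) ≥
      h * ((N : ℝ) - 1) * Real.log h -
        (h * ((N : ℝ) - 1) / 2) * Real.log (∑ i ∈ Finset.Icc 1 N, (X i) ^ 2) +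
        (h * ((N : ℝ) - 1) / 2) * Real.log ((N : ℝ) - 1) := by
  obtain ⟨m, rfl⟩ : ∃ m, N = m + 1 := ⟨N - 1, by omega⟩
  have hm1 : 1 ≤ m := by omega
  have hmR : (1:ℝ) ≤ (m:ℝ) := by exact_mod_cast hm1
  have hm0 : (0:ℝ) < m := by linarith
  simp only [Nat.add_sub_cancel] at *
  set d : ℕ → ℝ := fun i => X (i + 1) - X i with hdd
  have hd : ∀ i ∈ Finset.Icc 1 m, 0 < d i := by
    intro i hi
    rw [Finset.mem_Icc] at hi
    have := hX i hi.1 (by omega)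
    simp [hdd]; linarith
  set D := ∑ i ∈ Finset.Icc 1 m, d i with hD
  set Q := ∑ i ∈ Finset.Icc 1 m, d i ^ 2 with hQ
  set S := ∑ i ∈ Finset.Icc 1 (m+1), X i ^ 2 with hS
  have hDpos : 0 < D := Finset.sum_pos hd ⟨1, by simp [hm1]⟩
  have hcard : (Finset.Icc 1 m).card = m := by rw [Nat.card_Icc]; omega
  -- symmetrization identity
  have hIcc : ∀ a : ℕ, Finset.Icc a m = Finset.Ico a (m+1) := by
    intro a; rw [Finset.Ico_add_one_right_eq_Icc]
  have hA : D ^ 2 = 2 * (∑ i ∈ Finset.Icc 1 m, ∑ j ∈ Finset.Icc i m, d i * d j) - Q := by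
    have hsplit : ∑ i ∈ Finset.Icc 1 m, ∑ j ∈ Finset.Icc i m, d i * d j
        = Q + ∑ i ∈ Finset.Ico 1 (m+1), ∑ j ∈ Finset.Ico (i+1) (m+1), d i * d j := by
      rw [hQ, hIcc 1, ← Finset.sum_add_distrib]
      refine Finset.sum_congr rfl fun i hi => ?_
      rw [Finset.mem_Ico] at hi
      rw [hIcc i, ← Finset.sum_Ico_consecutive (fun j => d i * d j) (Nat.le_succ i)
        (by omega : i + 1 ≤ m + 1), Nat.Ico_succ_singleton, Finset.sum_singleton]
      ring
    have hswap : ∑ i ∈ Finset.Ico 1 (m+1), ∑ j ∈ Finset.Ico (i+1) (m+1), d i * d j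
        = ∑ j ∈ Finset.Ico 1 (m+1), ∑ i ∈ Finset.Ico 1 j, d i * d j :=
      Finset.sum_Ico_Ico_comm' 1 (m+1) _
    have hsq : D ^ 2 = ∑ j ∈ Finset.Ico 1 (m+1), ∑ i ∈ Finset.Ico 1 (m+1), d i * d j := by
      rw [hD, hIcc 1, sq, Finset.sum_mul_sum]
      rw [Finset.sum_comm]
    have hsplit2 : ∀ j ∈ Finset.Ico 1 (m+1),
        ∑ i ∈ Finset.Ico 1 (m+1), d i * d j
          = (∑ i ∈ Finset.Ico 1 j, d i * d j) + ∑ i ∈ Finset.Ico j (m+1), d i * d j := by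
      intro j hj
      rw [Finset.mem_Ico] at hj
      rw [Finset.sum_Ico_consecutive _ (by omega) (by omega)]
    have hsq2 : D ^ 2 = (∑ j ∈ Finset.Ico 1 (m+1), ∑ i ∈ Finset.Ico 1 j, d i * d j)
        + ∑ j ∈ Finset.Ico 1 (m+1), ∑ i ∈ Finset.Ico j (m+1), d i * d j := by
      rw [hsq, ← Finset.sum_add_distrib]
      exact Finset.sum_congr rfl hsplit2
    have hlast : ∑ j ∈ Finset.Ico 1 (m+1), ∑ i ∈ Finset.Ico j (m+1), d i * d j
        = ∑ i ∈ Finset.Icc 1 m, ∑ j ∈ Finset.Icc i m, d i * d j := by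
      rw [hIcc 1]
      refine Finset.sum_congr rfl fun j hj => ?_
      rw [hIcc j]
      exact Finset.sum_congr rfl fun i _ => mul_comm _ _
    rw [hsq2, hlast, ← hswap, hsplit]; ring
  -- Cauchy-Schwarz: D^2 ≤ m * Q
  have hCS : D ^ 2 ≤ (m:ℝ) * Q := by
    have := sq_sum_le_card_mul_sum_sq (s := Finset.Icc 1 m) (f := d)
    rw [hcard] at this
    exact_mod_cast this
  -- hence D^2 ≤ m * S
  have hDS : D ^ 2 ≤ (m:ℝ) * S := by
    have hN0 : (0:ℝ) < ((m:ℝ)+1) := by linarith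
    have hineq' : S ≥ 2 / ((m:ℝ)+1) * ∑ i ∈ Finset.Icc 1 m, ∑ j ∈ Finset.Icc i m, d i * d j := by
      have hc : ((m+1:ℕ):ℝ) = (m:ℝ)+1 := by push_cast; ring
      rw [hc] at hineq
      exact hineq
    have h1 : ((m:ℝ)+1) * S ≥ 2 * (∑ i ∈ Finset.Icc 1 m, ∑ j ∈ Finset.Icc i m, d i * d j) := by
      have h2 := mul_le_mul_of_nonneg_left hineq' (le_of_lt hN0)
      have h3 : ((m:ℝ)+1) * (2/((m:ℝ)+1) * ∑ i ∈ Finset.Icc 1 m, ∑ j ∈ Finset.Icc i m, d i * d j)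
          = 2 * ∑ i ∈ Finset.Icc 1 m, ∑ j ∈ Finset.Icc i m, d i * d j := by field_simp
      linarith [h2, h3.ge, h3.le]
    have h2 : ((m:ℝ)+1) * S ≥ D ^ 2 + Q := by linarith [hA]
    nlinarith [hCS, hDpos]
  have hSpos : 0 < S := by nlinarith [hDpos]
  -- Jensen: ∑ log d i ≤ m * log (D / m)
  have hJ : ∑ i ∈ Finset.Icc 1 m, Real.log (d i) ≤ (m:ℝ) * Real.log (D / m) := by
    have hc : ConcaveOn ℝ (Set.Ioi 0) Real.log := strictConcaveOn_log_Ioi.concaveOn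
    have := hc.le_map_sum (t := Finset.Icc 1 m) (w := fun _ => 1 / (m:ℝ)) (p := d)
      (fun i _ => by positivity)
      (by rw [Finset.sum_const, hcard, nsmul_eq_mul]; field_simp)
      (fun i hi => Set.mem_Ioi.mpr (hd i hi))
    simp only [smul_eq_mul] at this
    rw [← Finset.mul_sum, ← Finset.mul_sum] at this
    have h2 : Real.log (1 / (m:ℝ) * D) = Real.log (D / m) := by ring_nf
    rw [h2] at this
    calc ∑ i ∈ Finset.Icc 1 m, Real.log (d i)
        = (m:ℝ) * (1 / (m:ℝ) * ∑ i ∈ Finset.Icc 1 m, Real.log (d i)) := by field_simp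
      _ ≤ (m:ℝ) * Real.log (D / m) := by
          apply mul_le_mul_of_nonneg_left this (le_of_lt hm0)
  -- log (D/m) bound
  have hlog2 : 2 * Real.log (D / m) ≤ Real.log S - Real.log m := by
    have hDm : 0 < D / m := by positivity
    have h1 : (D / m) ^ 2 ≤ S / m := by
      rw [div_pow, div_le_div_iff₀ (by positivity) hm0]
      nlinarith [hDS, hm0]
    have := Real.log_le_log (by positivity) h1
    rw [Real.log_pow] at this
    rw [Real.log_div (ne_of_gt hSpos) (ne_of_gt hm0)] at this
    push_cast at this
    linarith
  have key : ∑ i ∈ Finset.Icc 1 m, Real.log (d i)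
      ≤ ((m:ℝ) / 2) * (Real.log S - Real.log m) := by
    calc ∑ i ∈ Finset.Icc 1 m, Real.log (d i) ≤ (m:ℝ) * Real.log (D / m) := hJ
      _ ≤ ((m:ℝ) / 2) * (Real.log S - Real.log m) := by nlinarith [hlog2, hm0]
  -- finish
  have hlogsplit : ∑ i ∈ Finset.Icc 1 m, Real.log (d i / h)
      = (∑ i ∈ Finset.Icc 1 m, Real.log (d i)) - (m:ℝ) * Real.log h := by
    have : ∀ i ∈ Finset.Icc 1 m, Real.log (d i / h)
        = Real.log (d i) - Real.log h := fun i hi =>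
      Real.log_div (ne_of_gt (hd i hi)) (ne_of_gt hh)
    rw [Finset.sum_congr rfl this, Finset.sum_sub_distrib, Finset.sum_const, hcard]
    simp [nsmul_eq_mul]
  push_cast
  rw [hlogsplit]
  have hfin : h * (∑ i ∈ Finset.Icc 1 m, Real.log (d i))
      ≤ (h * (m:ℝ) / 2) * (Real.log S - Real.log m) := by
    have := mul_le_mul_of_nonneg_left key (le_of_lt hh)
    calc h * (∑ i ∈ Finset.Icc 1 m, Real.log (d i))
        ≤ h * (((m:ℝ) / 2) * (Real.log S - Real.log m)) := this
      _ = (h * (m:ℝ) / 2) * (Real.log S - Real.log m) := by ring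
  rw [ge_iff_le]
  simp only [add_sub_cancel_right]
  linarith [hfin]
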